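/- Terminal alignment property: Let G be an npeg and let id denote the identity relation on ℕ. Then |a| ~G id▹a for every terminal a ∈ Σ. -/
import Mathlib


/-- Parsing expressions of an extended PEG (npeg) over non-terminals `N`
and terminals `T`. -/
inductive Expr (N T : Type) : Type where
  | eps : Expr N T
  | term : T → Expr N T
  | nt : N → Expr N T
  | seq : Expr N T → Expr N T → Expr N T
  | choice : Expr N T → Expr N T → Expr N T
  | neg : Expr N T → Expr N T
  | star : Expr N T → Expr N T
  | ind : (ℕ → ℕ → Prop) → Expr N T → Expr N T
  | pos : (ℕ → ℕ → Prop) → Expr N T → Expr N T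
  | aln : Expr N T → Expr N T

/-- An extended PEG: a production function and a start expression. -/
structure Npeg (N T : Type) where
  delta : N → Expr N T
  start : Expr N T

/-- Operation states: rest of input (terminals with their column numbers),
set of indentation baseline candidates, alignment flag. -/
abbrev PState (T : Type) := List (T × ℕ) × Set ℕ × Bool

/-- Image of a set under a binary relation on ℕ. -/
def img (r : ℕ → ℕ → Prop) (Y : Set ℕ) : Set ℕ := {x | ∃ y ∈ Y, r y x}

/-- Inverse relation. -/
def inv (r : ℕ → ℕ → Prop) : ℕ → ℕ → Prop := fun x y => r y x

/-- `Rel⁺(ℕ)`: relations whose image of ℕ is all of ℕ. -/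
def RelPlus (r : ℕ → ℕ → Prop) : Prop := img r Set.univ = Set.univ

/-- The parsing relation `G ⊢ e, t : σ ⇒ o`. -/
inductive Parse {N T : Type} (G : Npeg N T) :
    Expr N T → (ℕ → ℕ → Prop) → PState T → Option (PState T) → Prop where
  | eps {t : ℕ → ℕ → Prop} {σ : PState T} : Parse G .eps t σ (some σ)
  | term_false {t : ℕ → ℕ → Prop} {a : T} {i : ℕ} {w' : List (T × ℕ)} {I : Set ℕ}
      (h : i ∈ img (inv t) I) :
      Parse G (.term a) t ((a, i) :: w', I, false) (some (w', I ∩ img t {i}, false))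
  | term_true {t : ℕ → ℕ → Prop} {a : T} {i : ℕ} {w' : List (T × ℕ)} {I : Set ℕ}
      (h : i ∈ I) :
      Parse G (.term a) t ((a, i) :: w', I, true) (some (w', ({i} : Set ℕ), false))
  | term_fail {t : ℕ → ℕ → Prop} {a : T} {w : List (T × ℕ)} {I : Set ℕ} {b : Bool}
      (h : ¬ ∃ i w', w = (a, i) :: w' ∧
        ((b = false ∧ i ∈ img (inv t) I) ∨ (b = true ∧ i ∈ I))) :
      Parse G (.term a) t (w, I, b) none
  | nt {t σ o} {x : N} (h : Parse G (G.delta x) t σ o) : Parse G (.nt x) t σ o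
  | seq_ok {t σ σ' o p q} (h1 : Parse G p t σ (some σ')) (h2 : Parse G q t σ' o) :
      Parse G (.seq p q) t σ o
  | seq_fail {t σ p q} (h : Parse G p t σ none) : Parse G (.seq p q) t σ none
  | choice_ok {t σ σ' p q} (h : Parse G p t σ (some σ')) :
      Parse G (.choice p q) t σ (some σ')
  | choice_snd {t σ o p q} (h1 : Parse G p t σ none) (h2 : Parse G q t σ o) :
      Parse G (.choice p q) t σ o
  | neg_ok {t σ p} (h : Parse G p t σ none) : Parse G (.neg p) t σ (some σ)
  | neg_fail {t σ σ' p} (h : Parse G p t σ (some σ')) : Parse G (.neg p) t σ none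
  | star_end {t σ p} (h : Parse G p t σ none) : Parse G (.star p) t σ (some σ)
  | star_step {t σ σ' o p} (h1 : Parse G p t σ (some σ'))
      (h2 : Parse G (.star p) t σ' o) : Parse G (.star p) t σ o
  | ind_ok {t r p} {w : List (T × ℕ)} {I : Set ℕ} {b : Bool}
      {w' : List (T × ℕ)} {I' : Set ℕ} {b' : Bool}
      (h : Parse G p t (w, img (inv r) I, b) (some (w', I', b'))) :
      Parse G (.ind r p) t (w, I, b) (some (w', I ∩ img r I', b'))
  | ind_fail {t r p} {w : List (T × ℕ)} {I : Set ℕ} {b : Bool}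
      (h : Parse G p t (w, img (inv r) I, b) none) :
      Parse G (.ind r p) t (w, I, b) none
  | pos {t s σ o p} (h : Parse G p s σ o) : Parse G (.pos s p) t σ o
  | aln_ok {t p} {w : List (T × ℕ)} {I : Set ℕ} {b : Bool}
      {w' : List (T × ℕ)} {I' : Set ℕ} {b' : Bool}
      (h : Parse G p t (w, I, true) (some (w', I', b'))) :
      Parse G (.aln p) t (w, I, b) (some (w', I', b && b'))
  | aln_fail {t p} {w : List (T × ℕ)} {I : Set ℕ} {b : Bool}
      (h : Parse G p t (w, I, true) none) :
      Parse G (.aln p) t (w, I, b) none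

/-- Semantic equivalence of expressions in a grammar `G`. -/
def ExprEquiv {N T : Type} (G : Npeg N T) (p q : Expr N T) : Prop :=
  ∀ t : ℕ → ℕ → Prop, RelPlus t → ∀ (σ : PState T) (o : Option (PState T)),
    Parse G p t σ o ↔ Parse G q t σ o

lemma img_id' (I : Set ℕ) : img (fun x y : ℕ => x = y) I = I := by
  ext x; simp [img]

lemma img_inv_id (I : Set ℕ) : img (inv (fun x y : ℕ => x = y)) I = I := by
  ext x; simp [img, inv]

/-- Terminal alignment property: `|a| ~G id▹a`. -/
theorem aln_term {N T : Type} [Fintype N] [Fintype T] (G : Npeg N T) (a : T) :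
    ExprEquiv G (.aln (.term a)) (.pos (fun x y => x = y) (.term a)) := by
  intro t ht σ o
  obtain ⟨w, I, b⟩ := σ
  constructor
  · intro h
    cases h with
    | aln_ok h =>
      cases h with
      | @term_true _ _ i w' _ hi =>
        apply Parse.pos
        simp only [Bool.and_false]
        cases b with
        | true => exact Parse.term_true hi
        | false =>
          have : ({i} : Set ℕ) = I ∩ img (fun x y : ℕ => x = y) {i} := by
            rw [img_id']
            exact (Set.inter_eq_self_of_subset_right (by simpa using hi)).symm
          rw [this]
          exact Parse.term_false (by rwa [img_inv_id])
    | aln_fail h =>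
      cases h with
      | term_fail hno =>
        apply Parse.pos
        apply Parse.term_fail
        rintro ⟨i, w', rfl, hc⟩
        apply hno
        refine ⟨i, w', rfl, Or.inr ⟨rfl, ?_⟩⟩
        rcases hc with ⟨_, hi⟩ | ⟨_, hi⟩
        · rwa [img_inv_id] at hi
        · exact hi
  · intro h
    cases h with
    | pos h =>
      cases h with
      | @term_false _ _ i w' _ hi =>
        rw [img_inv_id] at hi
        have heq : I ∩ img (fun x y : ℕ => x = y) {i} = ({i} : Set ℕ) := by
          rw [img_id']
          exact Set.inter_eq_self_of_subset_right (by simpa using hi)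
        rw [heq]
        have h1 : Parse G (Expr.term a) t ((a,i)::w', I, true) (some (w', ({i}:Set ℕ), false)) :=
          Parse.term_true hi
        have := Parse.aln_ok (b := false) h1
        simpa using this
      | @term_true _ _ i w' _ hi =>
        have h1 : Parse G (Expr.term a) t ((a,i)::w', I, true) (some (w', ({i}:Set ℕ), false)) :=
          Parse.term_true hi
        have := Parse.aln_ok (b := true) h1
        simpa using this
      | term_fail hno =>
        apply Parse.aln_fail
        apply Parse.term_fail
        rintro ⟨i, w', rfl, hc⟩
        apply hno
        refine ⟨i, w', rfl, ?_⟩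
        rcases hc with ⟨h, hi⟩ | ⟨_, hi⟩
        · exact absurd h (by simp)
        · cases b with
          | true => exact Or.inr ⟨rfl, hi⟩
          | false => exact Or.inl ⟨rfl, by rwa [img_inv_id]⟩
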